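/- Let G be a connected finite weighted graph with positive edge weights, let u and v be two vertices of G, and let T be a common distance-preserving spanning tree of u and v in G. Let P = (u = v_0, v_1, ..., v_k = v) be the unique shortest u-v path in G, and for 0 ≤ i ≤ k let V_i = {x ∈ V(G) : d_G(x, v_i) = d_G(x, V(P))}. Then for every vertex x ∈ V_i, the unique u-x path in T contains the vertex v_i, and d_T(v_i, x) = d_G(v_i, x). -/

import Mathlib

open SimpleGraph

/-- The weighted length of a walk: the sum of the weights of its edges. -/
def SimpleGraph.Walk.wlength {V : Type*} {G : SimpleGraph V} (w : V → V → ℝ) {x y : V}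
    (p : G.Walk x y) : ℝ :=
  (p.darts.map fun d => w d.toProd.1 d.toProd.2).sum

/-- The weighted distance between two vertices: the minimum weighted length of a walk. -/
noncomputable def SimpleGraph.wdist {V : Type*} (G : SimpleGraph V) (w : V → V → ℝ)
    (x y : V) : ℝ :=
  sInf {r : ℝ | ∃ p : G.Walk x y, p.wlength w = r}

namespace SimpleGraph

variable {V : Type*} {G : SimpleGraph V} {w : V → V → ℝ}

namespace Walk

@[simp] lemma wlength_nil {x : V} : (Walk.nil : G.Walk x x).wlength w = 0 := rfl

@[simp] lemma wlength_cons {x y z : V} (h : G.Adj x y) (p : G.Walk y z) :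
    (p.cons h).wlength w = w x y + p.wlength w := by
  simp [wlength]

lemma wlength_append {x y z : V} (p : G.Walk x y) (q : G.Walk y z) :
    (p.append q).wlength w = p.wlength w + q.wlength w := by
  simp [wlength, darts_append]

lemma wlength_nonneg (hw : ∀ a b : V, G.Adj a b → 0 ≤ w a b) {x y : V} (p : G.Walk x y) :
    0 ≤ p.wlength w := by
  induction p with
  | nil => simp
  | cons h p ih => simpa using add_nonneg (hw _ _ h) ih

lemma wlength_pos (hw0 : ∀ a b : V, G.Adj a b → 0 ≤ w a b)
    (hw : ∀ a b : V, G.Adj a b → 0 < w a b) {x y : V} (p : G.Walk x y) (hxy : x ≠ y) :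
    0 < p.wlength w := by
  cases p with
  | nil => exact absurd rfl hxy
  | cons h p => simpa using add_pos_of_pos_of_nonneg (hw _ _ h) (wlength_nonneg hw0 p)

lemma wlength_reverse (hsymm : ∀ a b : V, w a b = w b a) {x y : V} (p : G.Walk x y) :
    p.reverse.wlength w = p.wlength w := by
  induction p with
  | nil => simp
  | cons h p ih =>
    rw [reverse_cons, wlength_append, ih, wlength_cons, wlength_cons, wlength_nil,
      hsymm]
    ring

lemma wlength_mapLe {G' : SimpleGraph V} (h : G ≤ G') {x y : V} (p : G.Walk x y) :
    (p.mapLe h).wlength w = p.wlength w := by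
  induction p with
  | nil => rfl
  | cons ha p ih =>
    simp only [Walk.mapLe, Walk.map_cons] at *
    rw [wlength_cons, wlength_cons, ih]
    rfl

lemma support_mapLe {G' : SimpleGraph V} (h : G ≤ G') {x y : V} (p : G.Walk x y) :
    (p.mapLe h).support = p.support := by
  induction p with
  | nil => rfl
  | cons ha p ih =>
    simp only [Walk.mapLe, Walk.map_cons, support_cons] at *
    rw [ih]

lemma getVert_mapLe {G' : SimpleGraph V} (h : G ≤ G') {x y : V} (p : G.Walk x y) (i : ℕ) :
    (p.mapLe h).getVert i = p.getVert i := by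
  induction p generalizing i with
  | nil => rfl
  | cons ha p ih =>
    cases i with
    | zero => rfl
    | succ n =>
      simp only [Walk.mapLe, Walk.map_cons, getVert_cons_succ] at *
      exact ih n

lemma getVert_mem_support' {x y : V} (p : G.Walk x y) (i : ℕ) : p.getVert i ∈ p.support := by
  induction p generalizing i with
  | nil => simp [getVert]
  | cons ha p ih =>
    cases i with
    | zero => simp [getVert]
    | succ n =>
      rw [getVert_cons_succ, support_cons]
      exact List.mem_cons_of_mem _ (ih n)

lemma wlength_dropUntil_le [DecidableEq V] (hw : ∀ a b : V, G.Adj a b → 0 ≤ w a b)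
    {x y z : V} (p : G.Walk x y) (hz : z ∈ p.support) :
    (p.dropUntil z hz).wlength w ≤ p.wlength w := by
  have := congrArg (Walk.wlength w) (p.take_spec hz)
  rw [wlength_append] at this
  nlinarith [wlength_nonneg hw (p.takeUntil z hz)]

lemma wlength_bypass_le [DecidableEq V] (hw : ∀ a b : V, G.Adj a b → 0 ≤ w a b)
    {x y : V} (p : G.Walk x y) : p.bypass.wlength w ≤ p.wlength w := by
  induction p with
  | nil => simp [Walk.bypass]
  | cons h p ih =>
    simp only [Walk.bypass]
    split_ifs with hs
    · calc (p.bypass.dropUntil _ hs).wlength w ≤ p.bypass.wlength w :=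
            wlength_dropUntil_le hw _ hs
        _ ≤ p.wlength w := ih
        _ ≤ (Walk.cons h p).wlength w := by
            rw [wlength_cons]; nlinarith [hw _ _ h]
    · rw [wlength_cons, wlength_cons]
      exact add_le_add le_rfl ih

end Walk

open Walk

lemma wdist_le (hw : ∀ a b : V, G.Adj a b → 0 ≤ w a b) {x y : V} (p : G.Walk x y) :
    G.wdist w x y ≤ p.wlength w :=
  csInf_le ⟨0, fun r ⟨q, hq⟩ => hq ▸ wlength_nonneg hw q⟩ ⟨p, rfl⟩

lemma wdist_nonneg (hw : ∀ a b : V, G.Adj a b → 0 ≤ w a b) {x y : V} (h : G.Reachable x y) :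
    0 ≤ G.wdist w x y := by
  obtain ⟨p⟩ := h
  exact le_csInf ⟨p.wlength w, p, rfl⟩ fun r ⟨q, hq⟩ => hq ▸ wlength_nonneg hw q

lemma exists_path_wlength_eq_wdist [Fintype V] (hw : ∀ a b : V, G.Adj a b → 0 ≤ w a b)
    {x y : V} (h : G.Reachable x y) :
    ∃ p : G.Walk x y, p.IsPath ∧ p.wlength w = G.wdist w x y := by
  classical
  obtain ⟨q0⟩ := h
  have hPne : (Finset.univ : Finset (G.Path x y)).Nonempty :=
    ⟨⟨q0.bypass, q0.bypass_isPath⟩, Finset.mem_univ _⟩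
  have hne : ((Finset.univ : Finset (G.Path x y)).image
      (fun p : G.Path x y => (p : G.Walk x y).wlength w)).Nonempty := hPne.image _
  set A := (Finset.univ : Finset (G.Path x y)).image
      (fun p : G.Path x y => (p : G.Walk x y).wlength w)
  obtain ⟨p0, _, hp0⟩ := Finset.mem_image.mp (A.min'_mem hne)
  refine ⟨p0, p0.isPath, le_antisymm ?_ (wdist_le hw _)⟩
  · rw [hp0]
    refine le_csInf ⟨q0.wlength w, q0, rfl⟩ ?_
    rintro r ⟨q, rfl⟩
    calc A.min' hne ≤ (q.bypass).wlength w := by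
          refine Finset.min'_le _ _ ?_
          exact Finset.mem_image.mpr ⟨⟨q.bypass, q.bypass_isPath⟩, Finset.mem_univ _, rfl⟩
      _ ≤ q.wlength w := wlength_bypass_le hw q

lemma wdist_comm (hsymm : ∀ a b : V, w a b = w b a) (x y : V) :
    G.wdist w x y = G.wdist w y x := by
  unfold wdist
  congr 1
  ext r
  constructor
  · rintro ⟨p, rfl⟩; exact ⟨p.reverse, wlength_reverse hsymm p⟩
  · rintro ⟨p, rfl⟩; exact ⟨p.reverse, wlength_reverse hsymm p⟩

lemma wdist_triangle [Fintype V] (hw : ∀ a b : V, G.Adj a b → 0 ≤ w a b) {x y z : V}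
    (h1 : G.Reachable x y) (h2 : G.Reachable y z) :
    G.wdist w x z ≤ G.wdist w x y + G.wdist w y z := by
  obtain ⟨p, _, hp⟩ := exists_path_wlength_eq_wdist hw h1
  obtain ⟨q, _, hq⟩ := exists_path_wlength_eq_wdist hw h2
  calc G.wdist w x z ≤ (p.append q).wlength w := wdist_le hw _
    _ = _ := by rw [wlength_append, hp, hq]

lemma wdist_anti [Fintype V] {T : SimpleGraph V} (hTG : T ≤ G)
    (hw : ∀ a b : V, G.Adj a b → 0 ≤ w a b) {x y : V} (h : T.Reachable x y) :
    G.wdist w x y ≤ T.wdist w x y := by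
  have hwT : ∀ a b : V, T.Adj a b → 0 ≤ w a b := fun a b hab => hw a b (hTG hab)
  obtain ⟨p, _, hp⟩ := exists_path_wlength_eq_wdist hwT h
  calc G.wdist w x y ≤ (p.mapLe hTG).wlength w := wdist_le hw _
    _ = p.wlength w := wlength_mapLe hTG p
    _ = _ := hp

lemma IsTree.wlength_eq_wdist {T : SimpleGraph V} (hT : T.IsTree)
    (hw : ∀ a b : V, T.Adj a b → 0 ≤ w a b) {x y : V} (p : T.Walk x y) (hp : p.IsPath) :
    p.wlength w = T.wdist w x y := by
  classical
  refine le_antisymm (le_csInf ⟨p.wlength w, p, rfl⟩ ?_) (wdist_le hw p)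
  rintro r ⟨q, rfl⟩
  obtain ⟨p0, _, hun⟩ := hT.existsUnique_path x y
  have h1 : p = p0 := hun p hp
  have h2 : q.bypass = p0 := hun q.bypass q.bypass_isPath
  calc p.wlength w = q.bypass.wlength w := by rw [h1, h2]
    _ ≤ q.wlength w := wlength_bypass_le hw q

/-- Decompose a walk at the first vertex belonging to `S`. -/
lemma exists_first_mem {x u : V} (S : Set V) (r : G.Walk x u) (hu : u ∈ S) :
    ∃ (z : V) (r1 : G.Walk x z) (r2 : G.Walk z u),
      r = r1.append r2 ∧ z ∈ S ∧ ∀ y ∈ r1.support, y ∈ S → y = z := by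
  induction r with
  | nil =>
    exact ⟨_, Walk.nil, Walk.nil, rfl, hu, by simp⟩
  | @cons a b u h r ih =>
    by_cases ha : a ∈ S
    · exact ⟨a, Walk.nil, Walk.cons h r, rfl, ha, by simp⟩
    · obtain ⟨z, r1, r2, heq, hz, hmin⟩ := ih hu
      refine ⟨z, Walk.cons h r1, r2, by rw [Walk.cons_append, heq], hz, ?_⟩
      intro y hy hyS
      rw [Walk.support_cons] at hy
      rcases List.mem_cons.mp hy with rfl | hy
      · exact absurd hyS ha
      · exact hmin y hy hyS

/-- On a shortest walk, distances split additively at every support vertex. -/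
lemma shortest_split [Fintype V] [DecidableEq V] (hG : G.Connected)
    (hw : ∀ a b : V, G.Adj a b → 0 ≤ w a b) {a b : V} (p : G.Walk a b)
    (hshort : p.wlength w = G.wdist w a b) {z : V} (hz : z ∈ p.support) :
    G.wdist w a z = (p.takeUntil z hz).wlength w ∧
      G.wdist w z b = (p.dropUntil z hz).wlength w ∧
      G.wdist w a z + G.wdist w z b = G.wdist w a b := by
  have h1 : G.wdist w a z ≤ (p.takeUntil z hz).wlength w := wdist_le hw _
  have h2 : G.wdist w z b ≤ (p.dropUntil z hz).wlength w := wdist_le hw _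
  have h3 : G.wdist w a b ≤ G.wdist w a z + G.wdist w z b :=
    wdist_triangle hw (hG.preconnected a z) (hG.preconnected z b)
  have h4 : (p.takeUntil z hz).wlength w + (p.dropUntil z hz).wlength w = G.wdist w a b := by
    rw [← hshort, ← wlength_append, p.take_spec hz]
  constructor
  · linarith
  constructor
  · linarith
  · linarith


lemma wdist_pos_of_ne [Fintype V] (hw0 : ∀ a b : V, G.Adj a b → 0 ≤ w a b)
    (hpos : ∀ a b : V, G.Adj a b → 0 < w a b) {z1 z2 : V} (h : G.Reachable z1 z2)
    (hne : z1 ≠ z2) : 0 < G.wdist w z1 z2 := by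
  obtain ⟨p, _, hp⟩ := exists_path_wlength_eq_wdist hw0 h
  rw [← hp]
  exact Walk.wlength_pos hw0 hpos p hne

/-- On a shortest walk, the distance from the start determines the support vertex. -/
lemma shortest_inj [Fintype V] [DecidableEq V] (hG : G.Connected)
    (hw0 : ∀ a b : V, G.Adj a b → 0 ≤ w a b)
    (hpos : ∀ a b : V, G.Adj a b → 0 < w a b) {a b : V} (p : G.Walk a b)
    (hshort : p.wlength w = G.wdist w a b) {z1 z2 : V} (hz1 : z1 ∈ p.support)
    (hz2 : z2 ∈ p.support) (hd : G.wdist w a z1 = G.wdist w a z2) : z1 = z2 := by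
  by_contra hne
  have hs1 := shortest_split hG hw0 p hshort hz1
  have hs2 := shortest_split hG hw0 p hshort hz2
  have hb : G.wdist w z1 b = G.wdist w z2 b := by linarith [hs1.2.2, hs2.2.2]
  have hpos12 : 0 < G.wdist w z1 z2 :=
    wdist_pos_of_ne hw0 hpos (hG.preconnected z1 z2) hne
  have hpos21 : 0 < G.wdist w z2 z1 :=
    wdist_pos_of_ne hw0 hpos (hG.preconnected z2 z1) (Ne.symm hne)
  have hz2mem : z2 ∈ (p.takeUntil z1 hz1).support ∨ z2 ∈ (p.dropUntil z1 hz1).support := by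
    have := hz2
    rw [← p.take_spec hz1, Walk.support_append] at this
    rcases List.mem_append.mp this with h | h
    · exact Or.inl h
    · exact Or.inr (List.mem_of_mem_tail h)
  rcases hz2mem with h | h
  · -- z2 on the prefix from a to z1
    have hE : (p.takeUntil z1 hz1).wlength w = G.wdist w a z1 := hs1.1.symm
    have := (shortest_split hG hw0 (p.takeUntil z1 hz1) hE h).2.2
    -- wdist a z2 + wdist z2 z1 = wdist a z1
    linarith
  · -- z2 on the suffix from z1 to b
    have hD : (p.dropUntil z1 hz1).wlength w = G.wdist w z1 b := hs1.2.1.symm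
    have := (shortest_split hG hw0 (p.dropUntil z1 hz1) hD h).2.2
    -- wdist z1 z2 + wdist z2 b = wdist z1 b
    linarith

end SimpleGraph
/-- The weighted distance from a vertex to a set of vertices. -/
noncomputable def SimpleGraph.wdistS {V : Type*} (G : SimpleGraph V) (w : V → V → ℝ)
    (x : V) (S : Set V) : ℝ :=
  sInf (G.wdist w x '' S)

/-- `Vset G w P i` is the set of vertices whose nearest vertex on the walk `P` is `P.getVert i`,
i.e. `V_i = {x : d_G(x, v_i) = d_G(x, V(P))}`. -/
def Vset {V : Type*} (G : SimpleGraph V) (w : V → V → ℝ) {u v : V} (P : G.Walk u v)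
    (i : ℕ) : Set V :=
  {x : V | G.wdist w x (P.getVert i) = G.wdistS w x {z | z ∈ P.support}}

/-- For every vertex `x ∈ V_i`, the unique `u`-`x` path in the common distance-preserving
spanning tree `T` contains the vertex `v_i`, and `d_T(v_i, x) = d_G(v_i, x)`. -/
theorem tree_path_through_nearest_vertex {V : Type*} [Fintype V] (G : SimpleGraph V)
    (hG : G.Connected) (w : V → V → ℝ) (hsymm : ∀ a b : V, w a b = w b a)
    (hpos : ∀ a b : V, G.Adj a b → 0 < w a b) (u v : V)
    (T : SimpleGraph V) (hTG : T ≤ G) (hT : T.IsTree)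
    (hdpu : ∀ x : V, T.wdist w u x = G.wdist w u x)
    (hdpv : ∀ x : V, T.wdist w v x = G.wdist w v x)
    (P : G.Walk u v) (hP : P.IsPath) (hPshort : P.wlength w = G.wdist w u v)
    (hPuniq : ∀ Q : G.Walk u v, Q.IsPath → Q.wlength w = G.wdist w u v → Q = P) :
    ∀ i : ℕ, i ≤ P.length → ∀ x : V, x ∈ Vset G w P i →
      (∀ p : T.Walk u x, p.IsPath → P.getVert i ∈ p.support) ∧
        T.wdist w (P.getVert i) x = G.wdist w (P.getVert i) x := by
  classical
  intro i hi x hx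
  have hw0 : ∀ a b : V, G.Adj a b → 0 ≤ w a b := fun a b h => (hpos a b h).le
  have hwT0 : ∀ a b : V, T.Adj a b → 0 ≤ w a b := fun a b h => hw0 a b (hTG h)
  have hposT : ∀ a b : V, T.Adj a b → 0 < w a b := fun a b h => hpos a b (hTG h)
  have hTc : T.Connected := hT.isConnected
  -- the tree path from u to v maps onto P
  obtain ⟨PT, hPT, hPTuniq⟩ := hT.existsUnique_path u v
  have hPTlen : PT.wlength w = T.wdist w u v := hT.wlength_eq_wdist hwT0 PT hPT
  have hPTG : PT.mapLe hTG = P := by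
    apply hPuniq
    · exact (Walk.mapLe_isPath hTG).mpr hPT
    · rw [Walk.wlength_mapLe, hPTlen, hdpu v]
  have hPsupp : P.support = PT.support := by rw [← hPTG, Walk.support_mapLe]
  set z := P.getVert i with hzdef
  have hzP : z ∈ P.support := Walk.getVert_mem_support' P i
  -- the tree path from u to x
  obtain ⟨q, hq, hquniq⟩ := hT.existsUnique_path u x
  set r := q.reverse with hrdef
  have hr : r.IsPath := hq.reverse
  obtain ⟨m, r1, r2, hreq, hmS, hmin⟩ :=
    exists_first_mem {y | y ∈ P.support} r (P.start_mem_support : u ∈ _)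
  have hmP : m ∈ P.support := hmS
  have hmPT : m ∈ PT.support := hPsupp ▸ hmP
  have hr1p : r1.IsPath := Walk.IsPath.of_append_left (hreq ▸ hr)
  have hr2p : r2.IsPath := Walk.IsPath.of_append_right (hreq ▸ hr)
  -- abbreviations
  set α := G.wdist w u m with hα
  set β := G.wdist w v m with hβ
  set dm := T.wdist w x m with hdm
  set s := G.wdist w x z with hs
  set ai := G.wdist w u z with hai
  set bi := G.wdist w v z with hbi
  set L := G.wdist w u v with hL
  -- F3 : d_G(u,x) = α + dm
  have hr1len : r1.wlength w = dm := hT.wlength_eq_wdist hwT0 r1 hr1p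
  have hr2len : r2.wlength w = T.wdist w m u := hT.wlength_eq_wdist hwT0 r2 hr2p
  have hrlen : r.wlength w = T.wdist w x u := hT.wlength_eq_wdist hwT0 r hr
  have F3 : G.wdist w u x = α + dm := by
    have h1 : r.wlength w = r1.wlength w + r2.wlength w := by
      rw [hreq, Walk.wlength_append]
    rw [hr1len, hr2len, hrlen] at h1
    have h2 : T.wdist w x u = T.wdist w u x := wdist_comm hsymm x u
    have h3 : T.wdist w m u = T.wdist w u m := wdist_comm hsymm m u
    rw [h2, hdpu x] at h1
    rw [h3, hdpu m] at h1
    rw [h1, hα]; ring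
  -- splits of P in G at m and at z
  have hsplm := shortest_split hG hw0 P hPshort hmP
  have hsplz := shortest_split hG hw0 P hPshort hzP
  have F1 : α + β = L := by
    have := hsplm.2.2
    have hc : G.wdist w m v = G.wdist w v m := wdist_comm hsymm m v
    rw [hc] at this
    exact this
  have F2 : ai + bi = L := by
    have := hsplz.2.2
    have hc : G.wdist w z v = G.wdist w v z := wdist_comm hsymm z v
    rw [hc] at this
    exact this
  -- split of PT in T at m
  have hsplTm := shortest_split hTc hwT0 PT hPTlen hmPT
  -- F4 : d_G(v,x) = β + dm, via the path r1 ++ (PT.dropUntil m)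
  have hdropPT : (PT.dropUntil m hmPT).IsPath := hPT.dropUntil hmPT
  have hdisj : ∀ y ∈ r1.support, y ∈ (PT.dropUntil m hmPT).support.tail → False := by
    intro y hy1 hy2
    have hyP : y ∈ P.support := by
      rw [hPsupp]
      exact PT.support_dropUntil_subset hmPT (List.mem_of_mem_tail hy2)
    have : y = m := hmin y hy1 hyP
    subst this
    have hnodup : ((PT.dropUntil y hmPT).support).Nodup := hdropPT.support_nodup
    have hcons : (PT.dropUntil y hmPT).support
        = y :: (PT.dropUntil y hmPT).support.tail := (PT.dropUntil y hmPT).support_eq_cons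
    rw [hcons] at hnodup
    exact (List.nodup_cons.mp hnodup).1 hy2
  have hWpath : (r1.append (PT.dropUntil m hmPT)).IsPath := by
    rw [Walk.isPath_def, Walk.support_append, List.nodup_append]
    refine ⟨hr1p.support_nodup, hdropPT.support_nodup.tail, ?_⟩
    intro y hy1 y' hy2 hyy
    subst hyy
    exact hdisj y hy1 hy2
  have F4 : G.wdist w v x = β + dm := by
    have hW : (r1.append (PT.dropUntil m hmPT)).wlength w = T.wdist w x v :=
      hT.wlength_eq_wdist hwT0 _ hWpath
    rw [Walk.wlength_append, hr1len] at hW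
    have hdlen : (PT.dropUntil m hmPT).wlength w = T.wdist w m v := hsplTm.2.1.symm
    rw [hdlen] at hW
    have h1 : T.wdist w m v = T.wdist w v m := wdist_comm hsymm m v
    have h2 : T.wdist w x v = T.wdist w v x := wdist_comm hsymm x v
    rw [h1, hdpv m] at hW
    rw [h2, hdpv x] at hW
    rw [← hW, hβ]; ring
  -- F5 : s ≤ d_G(x,m) ≤ dm
  have hxm_le : G.wdist w x m ≤ dm :=
    wdist_anti hTG hw0 (hTc.preconnected x m)
  have F5 : s ≤ G.wdist w x m := by
    rw [hs, hx]
    refine csInf_le ⟨0, ?_⟩ ⟨m, hmP, rfl⟩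
    rintro ρ ⟨y, _, rfl⟩
    exact wdist_nonneg hw0 (hG.preconnected x y)
  -- F6, F7 : triangle inequalities through z
  have F6 : G.wdist w u x ≤ ai + s := by
    have := wdist_triangle hw0 (hG.preconnected u z) (hG.preconnected z x)
    have hc : G.wdist w z x = s := wdist_comm hsymm z x
    rw [hc] at this
    exact this
  have F7 : G.wdist w v x ≤ bi + s := by
    have := wdist_triangle hw0 (hG.preconnected v z) (hG.preconnected z x)
    have hc : G.wdist w z x = s := wdist_comm hsymm z x
    rw [hc] at this
    exact this
  -- numeric conclusions
  have hdms : dm = s := by linarith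
  have hαai : α = ai := by linarith
  -- m = z
  have hmz : m = z := shortest_inj hG hw0 hpos P hPshort hmP hzP (hαai)
  constructor
  · intro p hp
    have hpq : p = q := hquniq p hp
    have hmr : m ∈ r.support := by
      rw [hreq, Walk.support_append]
      exact List.mem_append_left _ (Walk.end_mem_support r1)
    have : m ∈ q.support := by
      rw [hrdef, Walk.support_reverse] at hmr
      exact List.mem_reverse.mp hmr
    rw [hpq, ← hmz]
    exact this
  · have h1 : T.wdist w z x = T.wdist w x z := wdist_comm hsymm z x
    have h2 : G.wdist w z x = G.wdist w x z := wdist_comm hsymm z x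
    rw [h1, h2, ← hs, ← hmz, ← hdm, hdms]
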